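/- Let M be an irreducible nonnegative square matrix. Then the index of imprimitivity h(M) of M equals the greatest common divisor of the lengths of all directed cycles in the associated directed graph D(M). -/

import Mathlib

open Polynomial

def Matrix.IsReducible {n : ℕ} (M : Matrix (Fin n) (Fin n) ℝ) : Prop :=
  ∃ (p : ℕ), 0 < p ∧ p < n ∧ ∃ σ : Equiv.Perm (Fin n),
    ∀ i j : Fin n, p ≤ (i : ℕ) → (j : ℕ) < p → M (σ i) (σ j) = 0

def Matrix.IsIrreducible' {n : ℕ} (M : Matrix (Fin n) (Fin n) ℝ) : Prop :=
  ¬ M.IsReducible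

noncomputable def Matrix.eigs {n : ℕ} (M : Matrix (Fin n) (Fin n) ℝ) : Multiset ℂ :=
  (M.map (Complex.ofReal)).charpoly.roots

/-- There is a cycle of length `k` through the vertex `v` in the directed graph `D(M)`
associated to `M` (an arc goes from `j` to `i` whenever `M i j ≠ 0`). -/
def Matrix.HasCycle {n : ℕ} (M : Matrix (Fin n) (Fin n) ℝ) (v : Fin n) (k : ℕ) : Prop :=
  ∃ f : ℕ → Fin n, f 0 = v ∧ f k = v ∧ ∀ t < k, M (f (t + 1)) (f t) ≠ 0

/-- `d` is the greatest common divisor of the set `S` of natural numbers. -/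
def IsGCDOf (S : Set ℕ) (d : ℕ) : Prop :=
  (∀ k ∈ S, d ∣ k) ∧ ∀ e : ℕ, (∀ k ∈ S, e ∣ k) → e ∣ d

namespace PFAux

open Matrix

variable {n : ℕ}

/-- evaluation of charpoly as a determinant -/
lemma charpoly_eval {F : Type*} [Field F] (B : Matrix (Fin n) (Fin n) F) (μ : F) :
    B.charpoly.eval μ = (μ • (1 : Matrix (Fin n) (Fin n) F) - B).det := by
  rw [Matrix.charpoly, ← coe_evalRingHom, RingHom.map_det]
  congr 1
  ext i j
  by_cases h : i = j
  · subst h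
    simp [charmatrix_apply_eq, Matrix.one_apply, Matrix.smul_apply]
  · simp [charmatrix_apply_ne _ _ _ h, Matrix.one_apply_ne h, Matrix.smul_apply]

lemma isRoot_charpoly_iff_exists {F : Type*} [Field F] (B : Matrix (Fin n) (Fin n) F) (μ : F) :
    B.charpoly.eval μ = 0 ↔ ∃ v : Fin n → F, v ≠ 0 ∧ B.mulVec v = μ • v := by
  rw [charpoly_eval]
  rw [← Matrix.exists_mulVec_eq_zero_iff]
  constructor
  · rintro ⟨v, hv, hv2⟩
    refine ⟨v, hv, ?_⟩
    rw [Matrix.sub_mulVec, Matrix.smul_mulVec, Matrix.one_mulVec, sub_eq_zero] at hv2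
    exact hv2.symm
  · rintro ⟨v, hv, hv2⟩
    refine ⟨v, hv, ?_⟩
    rw [Matrix.sub_mulVec, Matrix.smul_mulVec, Matrix.one_mulVec, sub_eq_zero, hv2]

lemma mem_roots_charpoly_iff_exists {F : Type*} [Field F] (B : Matrix (Fin n) (Fin n) F) (μ : F) :
    μ ∈ B.charpoly.roots ↔ ∃ v : Fin n → F, v ≠ 0 ∧ B.mulVec v = μ • v := by
  rw [Polynomial.mem_roots (B.charpoly_monic.ne_zero), IsRoot.def,
    isRoot_charpoly_iff_exists]


/-- roots of the charpoly of `B^m` are `m`-th powers of roots of charpoly of `B`. -/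
lemma root_pow_of_root_charpoly_pow (B : Matrix (Fin n) (Fin n) ℂ) {m : ℕ} (hm : m ≠ 0)
    {μ : ℂ} (hμ : μ ∈ (B ^ m).charpoly.roots) :
    ∃ r : ℂ, r ∈ B.charpoly.roots ∧ r ^ m = μ := by
  have hdet : ((μ • (1 : Matrix (Fin n) (Fin n) ℂ) - B ^ m)).det = 0 := by
    rw [← charpoly_eval]
    exact (Polynomial.mem_roots ((B ^ m).charpoly_monic.ne_zero)).mp hμ
  set q : ℂ[X] := X ^ m - C μ with hq
  have hqm : q.Monic := monic_X_pow_sub_C μ hm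
  have hqs : q.Splits := IsAlgClosed.splits q
  have hfact : q = (q.roots.map fun r => X - C r).prod :=
    hqs.eq_prod_roots_of_monic hqm
  set l : List ℂ := q.roots.toList with hl
  have hfactl : q = (l.map fun r => X - C r).prod := by
    rw [hfact]
    have hcoe : ((l.map fun r => X - C r : List ℂ[X]) : Multiset ℂ[X])
        = q.roots.map fun r => X - C r := by
      rw [← Multiset.map_coe, hl, Multiset.coe_toList]
    rw [← hcoe, Multiset.prod_coe]
  have haev : aeval B q = B ^ m - μ • 1 := by
    rw [hq]; simp [Algebra.algebraMap_eq_smul_one]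
  have hdet2 : (B ^ m - μ • (1 : Matrix (Fin n) (Fin n) ℂ)).det = 0 := by
    rw [← neg_sub (μ • (1 : Matrix (Fin n) (Fin n) ℂ)) (B ^ m), Matrix.det_neg, hdet, mul_zero]
  have h1 : aeval B q = ((l.map fun r => X - C r).map (aeval B)).prod := by
    conv_lhs => rw [hfactl]
    exact map_list_prod (aeval B : ℂ[X] →ₐ[ℂ] Matrix (Fin n) (Fin n) ℂ).toMonoidHom _
  have h2 : (((l.map fun r => X - C r).map (aeval B)).map Matrix.det).prod = 0 := by
    have := (map_list_prod (Matrix.detMonoidHom : Matrix (Fin n) (Fin n) ℂ →* ℂ)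
      ((l.map fun r => X - C r).map (aeval B))).symm
    simp only [Matrix.coe_detMonoidHom] at this
    rw [this, ← h1, haev]; exact hdet2
  rw [List.prod_eq_zero_iff] at h2
  rw [List.mem_map] at h2
  obtain ⟨Bd, hBd, hBdet⟩ := h2
  rw [List.mem_map] at hBd
  obtain ⟨pX, hpX, hBp⟩ := hBd
  rw [List.mem_map] at hpX
  obtain ⟨r, hr, hXr⟩ := hpX
  have hrq : r ∈ q.roots := by rw [hl] at hr; exact (Multiset.mem_toList).mp hr
  have hBr : Bd = B - r • 1 := by
    rw [← hBp, ← hXr]; simp [Algebra.algebraMap_eq_smul_one]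
  refine ⟨r, ?_, ?_⟩
  · rw [Polynomial.mem_roots (B.charpoly_monic.ne_zero), IsRoot.def, charpoly_eval]
    rw [← neg_sub (r • (1 : Matrix (Fin n) (Fin n) ℂ)) B] at hBr
    rw [hBr] at hBdet
    rw [Matrix.det_neg] at hBdet
    rcases mul_eq_zero.mp hBdet with h | h
    · exact absurd h (by simp)
    · exact h
  · have := (Polynomial.mem_roots (hqm.ne_zero)).mp hrq
    rw [IsRoot.def, hq] at this
    simpa [sub_eq_zero] using this


lemma multiset_abs_sum_le (s : Multiset ℂ) (c : ℝ) (h : ∀ z ∈ s, ‖z‖ ≤ c) :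
    ‖s.sum‖ ≤ s.card * c := by
  induction s using Multiset.induction_on with
  | empty => simp
  | cons a s ih =>
    simp only [Multiset.sum_cons, Multiset.card_cons]
    calc ‖a + s.sum‖ ≤ ‖a‖ + ‖s.sum‖ := norm_add_le _ _
      _ ≤ c + s.card * c := by
          gcongr
          · exact h a (Multiset.mem_cons_self a s)
          · exact ih (fun z hz => h z (Multiset.mem_cons_of_mem hz))
      _ = ((s.card + 1 : ℕ)) * c := by push_cast; ring

lemma trace_pow_le (M : Matrix (Fin n) (Fin n) ℝ) (δ₀ : ℝ) (hδ : 0 ≤ δ₀)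
    (hδmax : ∀ δ ∈ (M.map (Complex.ofReal)).charpoly.roots, ‖δ‖ ≤ δ₀)
    {m : ℕ} (hm : m ≠ 0) :
    Matrix.trace (M ^ m) ≤ n * δ₀ ^ m := by
  set A : Matrix (Fin n) (Fin n) ℂ := M.map (Complex.ofReal) with hA
  have hpow : A ^ m = (M ^ m).map (Complex.ofReal) := by
    rw [hA]
    have h1 : ∀ (N : Matrix (Fin n) (Fin n) ℝ),
        N.map (Complex.ofReal) = Complex.ofRealHom.mapMatrix N := fun N => rfl
    rw [h1, h1, map_pow]
  have htr : Matrix.trace (A ^ m) = ((Matrix.trace (M ^ m) : ℝ) : ℂ) := by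
    rw [hpow]
    simp [Matrix.trace, Matrix.map_apply]
  have hsum : Matrix.trace (A ^ m) = (A ^ m).charpoly.roots.sum :=
    Matrix.trace_eq_sum_roots_charpoly (A ^ m)
  have hcard : ((A ^ m).charpoly.roots).card = n := by
    have := (Polynomial.splits_iff_card_roots).mp (IsAlgClosed.splits (A ^ m).charpoly)
    rw [this, Matrix.charpoly_natDegree_eq_dim, Fintype.card_fin]
  have hbound : ∀ μ ∈ (A ^ m).charpoly.roots, ‖μ‖ ≤ δ₀ ^ m := by
    intro μ hμ
    obtain ⟨r, hr, hrm⟩ := root_pow_of_root_charpoly_pow A hm hμ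
    rw [← hrm]
    rw [norm_pow]
    exact pow_le_pow_left₀ (norm_nonneg r) (hδmax r hr) m
  have := multiset_abs_sum_le ((A ^ m).charpoly.roots) (δ₀ ^ m) hbound
  rw [← hsum, htr, hcard] at this
  calc Matrix.trace (M ^ m) ≤ |Matrix.trace (M ^ m)| := le_abs_self _
    _ = ‖((Matrix.trace (M ^ m) : ℝ) : ℂ)‖ := by rw [Complex.norm_real, Real.norm_eq_abs]
    _ ≤ n * δ₀ ^ m := this


/-- abstract path property -/
def PathP (P : Fin n → Fin n → Prop) (j i : Fin n) (k : ℕ) : Prop :=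
  ∃ f : ℕ → Fin n, f 0 = j ∧ f k = i ∧ ∀ t < k, P (f (t + 1)) (f t)

lemma pathP_zero (P : Fin n → Fin n → Prop) (j i : Fin n) :
    PathP P j i 0 ↔ i = j := by
  constructor
  · rintro ⟨f, h0, hk, _⟩; rw [← h0, ← hk]
  · rintro rfl; exact ⟨fun _ => i, rfl, rfl, fun t ht => absurd ht (Nat.not_lt_zero t)⟩

lemma pathP_succ (P : Fin n → Fin n → Prop) (j i : Fin n) (k : ℕ) :
    PathP P j i (k + 1) ↔ ∃ c, PathP P j c k ∧ P i c := by
  constructor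
  · rintro ⟨f, h0, hk, harc⟩
    refine ⟨f k, ⟨f, h0, rfl, fun t ht => harc t (ht.trans (Nat.lt_succ_self k))⟩, ?_⟩
    have := harc k (Nat.lt_succ_self k)
    rwa [hk] at this
  · rintro ⟨c, ⟨f, h0, hk, harc⟩, harc2⟩
    refine ⟨fun t => if t ≤ k then f t else i, by simpa using h0, by simp, ?_⟩
    intro t ht
    rcases Nat.lt_or_ge t k with h | h
    · simpa [Nat.le_of_lt h, Nat.succ_le_of_lt h] using harc t h
    · have htk : t = k := le_antisymm (Nat.lt_succ_iff.mp ht) h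
      subst htk
      simpa [hk] using harc2

section Nonneg
variable {M : Matrix (Fin n) (Fin n) ℝ} (hM : ∀ i j, 0 ≤ M i j)
include hM

lemma pow_entry_nonneg : ∀ (k : ℕ) (i j : Fin n), 0 ≤ (M ^ k) i j := by
  intro k
  induction k with
  | zero => intro i j; by_cases h : i = j <;> simp [Matrix.one_apply, h]
  | succ k ih =>
    intro i j
    rw [pow_succ', Matrix.mul_apply]
    exact Finset.sum_nonneg fun c _ => mul_nonneg (hM i c) (ih c j)

lemma pow_entry_ne_iff_path : ∀ (k : ℕ) (i j : Fin n),
    (M ^ k) i j ≠ 0 ↔ PathP (fun a b => M a b ≠ 0) j i k := by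
  intro k
  induction k with
  | zero =>
    intro i j
    rw [pathP_zero]
    constructor
    · intro h
      by_contra hij
      exact h (by simp [Matrix.one_apply_ne hij])
    · rintro rfl; simp
  | succ k ih =>
    intro i j
    rw [pathP_succ]
    rw [pow_succ', Matrix.mul_apply]
    have hnz : (∑ c : Fin n, M i c * (M ^ k) c j) ≠ 0 ↔
        ∃ c ∈ Finset.univ, M i c * (M ^ k) c j ≠ 0 := by
      rw [not_iff_comm, not_exists]
      push_neg
      rw [Finset.sum_eq_zero_iff_of_nonneg
        (fun c _ => mul_nonneg (hM i c) (pow_entry_nonneg hM k c j))]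
    rw [hnz]
    constructor
    · rintro ⟨c, _, hc⟩
      rcases mul_ne_zero_iff.mp hc with ⟨h1, h2⟩
      exact ⟨c, (ih c j).mp h2, h1⟩
    · rintro ⟨c, h2, h1⟩
      exact ⟨c, Finset.mem_univ c, mul_ne_zero h1 ((ih c j).mpr h2)⟩

lemma pow_entry_mul_le (a b : ℕ) (i c j : Fin n) :
    (M ^ a) i c * (M ^ b) c j ≤ (M ^ (a + b)) i j := by
  rw [pow_add, Matrix.mul_apply]
  refine Finset.single_le_sum (f := fun c => (M ^ a) i c * (M ^ b) c j) ?_ (Finset.mem_univ c)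
  exact fun c _ => mul_nonneg (pow_entry_nonneg hM a i c) (pow_entry_nonneg hM b c j)

end Nonneg


lemma reducible_of_closed (M : Matrix (Fin n) (Fin n) ℝ) (C : Finset (Fin n))
    (h1 : C.Nonempty) (h2 : C ≠ Finset.univ)
    (hcl : ∀ a ∈ C, ∀ b, b ∉ C → M b a = 0) : M.IsReducible := by
  set p := C.card with hp
  have hp0 : 0 < p := Finset.card_pos.mpr h1
  have hpn : p < n := by
    have := Finset.card_lt_card (Finset.ssubset_univ_iff.mpr h2)
    simpa using this
  have hsplit : p + (n - p) = n := Nat.add_sub_cancel' hpn.le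
  have hcompl : (Cᶜ : Finset (Fin n)).card = n - p := by
    rw [Finset.card_compl]
    simp [hp]
  let e1 : Fin p ≃ {x : Fin n // x ∈ C} := C.equivFin.symm
  let e2 : Fin (n - p) ≃ {x : Fin n // x ∉ C} :=
    (finCongr hcompl.symm).trans ((Cᶜ).equivFin.symm.trans
      (Equiv.subtypeEquivRight (fun x => Finset.mem_compl)))
  let σ : Equiv.Perm (Fin n) :=
    ((finCongr hsplit.symm).trans (finSumFinEquiv.symm.trans
      ((e1.sumCongr e2).trans (Equiv.sumCompl (· ∈ C)))))
  have hmem : ∀ j : Fin n, (j : ℕ) < p → σ j ∈ C := by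
    intro j hj
    have hcast : (finCongr hsplit.symm) j = Fin.castAdd (n - p) ⟨(j : ℕ), hj⟩ := by
      apply Fin.ext; simp
    show σ j ∈ C
    simp only [σ, Equiv.trans_apply, hcast, finSumFinEquiv_symm_apply_castAdd,
      Equiv.sumCongr_apply, Sum.map_inl, Equiv.sumCompl_apply_inl]
    exact (e1 ⟨(j : ℕ), hj⟩).2
  have hnotmem : ∀ i : Fin n, p ≤ (i : ℕ) → σ i ∉ C := by
    intro i hi
    have hcast : (finCongr hsplit.symm) i
        = Fin.natAdd p ⟨(i : ℕ) - p, by omega⟩ := by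
      apply Fin.ext; simp; omega
    show σ i ∉ C
    simp only [σ, Equiv.trans_apply, hcast, finSumFinEquiv_symm_apply_natAdd,
      Equiv.sumCongr_apply, Sum.map_inr, Equiv.sumCompl_apply_inr]
    exact (e2 ⟨(i : ℕ) - p, by omega⟩).2
  exact ⟨p, hp0, hpn, σ, fun i j hi hj => hcl (σ j) (hmem j hj) (σ i) (hnotmem i hi)⟩

lemma reach_of_irreducible (M : Matrix (Fin n) (Fin n) ℝ) (hM : ∀ i j, 0 ≤ M i j)
    (hirr : M.IsIrreducible') : ∀ i j : Fin n, ∃ k : ℕ, (M ^ k) j i ≠ 0 := by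
  intro i j
  classical
  set C : Finset (Fin n) := Finset.univ.filter (fun b => ∃ k : ℕ, (M ^ k) b i ≠ 0) with hC
  have hiC : i ∈ C := by
    simp only [hC, Finset.mem_filter, Finset.mem_univ, true_and]
    exact ⟨0, by simp⟩
  have hclosed : ∀ a ∈ C, ∀ b : Fin n, M b a ≠ 0 → b ∈ C := by
    intro a ha b hba
    simp only [hC, Finset.mem_filter, Finset.mem_univ, true_and] at ha ⊢
    obtain ⟨k, hk⟩ := ha
    refine ⟨1 + k, ?_⟩
    have h1 : (M ^ 1) b a * (M ^ k) a i ≤ (M ^ (1 + k)) b i := pow_entry_mul_le hM 1 k b a i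
    have h2 : 0 < (M ^ 1) b a * (M ^ k) a i := by
      apply mul_pos
      · exact lt_of_le_of_ne (by simpa using hM b a) (by simpa using (Ne.symm hba))
      · exact lt_of_le_of_ne (pow_entry_nonneg hM k a i) (Ne.symm hk)
    exact ne_of_gt (lt_of_lt_of_le h2 h1)
  by_cases huniv : C = Finset.univ
  · have : j ∈ C := huniv ▸ Finset.mem_univ j
    simpa only [hC, Finset.mem_filter, Finset.mem_univ, true_and] using this
  · exfalso
    apply hirr
    apply reducible_of_closed M C ⟨i, hiC⟩ huniv
    intro a ha b hb
    by_contra hba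
    exact hb (hclosed a ha b hba)


section Sub
variable {M : Matrix (Fin n) (Fin n) ℝ}

lemma mulVec_mono (hM : ∀ i j, 0 ≤ M i j) {u v : Fin n → ℝ} (huv : ∀ i, u i ≤ v i) :
    ∀ i, M.mulVec u i ≤ M.mulVec v i := by
  intro i
  show ∑ j, M i j * u j ≤ ∑ j, M i j * v j
  apply Finset.sum_le_sum
  intro j _
  exact mul_le_mul_of_nonneg_left (huv j) (hM i j)

lemma mulVec_pos (hP : ∀ i j, 0 < M i j) {y : Fin n → ℝ} (hy0 : ∀ i, 0 ≤ y i)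
    (hyne : y ≠ 0) : ∀ i, 0 < M.mulVec y i := by
  intro i
  obtain ⟨j0, hj0⟩ : ∃ j0, y j0 ≠ 0 := by
    by_contra hc; push_neg at hc; exact hyne (funext hc)
  have hyj0 : 0 < y j0 := lt_of_le_of_ne (hy0 j0) (Ne.symm hj0)
  have : M i j0 * y j0 ≤ M.mulVec y i := by
    apply Finset.single_le_sum (f := fun j => M i j * y j) ?_ (Finset.mem_univ j0)
    exact fun j _ => mul_nonneg (hP i j).le (hy0 j)
  exact lt_of_lt_of_le (mul_pos (hP i j0) hyj0) this

lemma subinvariant_eq (hM : ∀ i j, 0 ≤ M i j)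
    (hreach : ∀ i j : Fin n, ∃ k : ℕ, (M ^ k) j i ≠ 0)
    {δ₀ : ℝ} (hδpos : 0 < δ₀)
    (htr : ∀ m : ℕ, m ≠ 0 → Matrix.trace (M ^ m) ≤ n * δ₀ ^ m)
    {y : Fin n → ℝ} (hy0 : ∀ i, 0 ≤ y i) (hyne : y ≠ 0)
    (hsub : ∀ i, δ₀ * y i ≤ M.mulVec y i) :
    M.mulVec y = δ₀ • y ∧ ∀ i, 0 < y i := by
  classical
  have hn : (Fin n) → True := fun _ => trivial
  have hne : Nonempty (Fin n) := by
    rcases Nat.eq_zero_or_pos n with h | h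
    · exfalso; apply hyne; subst h; ext i; exact absurd i.2 (Nat.not_lt_zero _)
    · exact ⟨⟨0, h⟩⟩
  -- choice of path lengths
  set kf : Fin n → Fin n → ℕ := fun i j => Classical.choose (hreach i j) with hkf
  have hkfs : ∀ i j, (M ^ (kf i j)) j i ≠ 0 := fun i j => Classical.choose_spec (hreach i j)
  have hkfpos : ∀ i j, 0 < (M ^ (kf i j)) j i :=
    fun i j => lt_of_le_of_ne (pow_entry_nonneg hM _ j i) (Ne.symm (hkfs i j))
  -- the auxiliary positive matrix P
  set K : ℕ := Finset.univ.sup (fun p : Fin n × Fin n => kf p.1 p.2) with hK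
  set P : Matrix (Fin n) (Fin n) ℝ := ∑ t ∈ Finset.range (K + 1), M ^ t with hP
  have hPapp : ∀ a b, P a b = ∑ t ∈ Finset.range (K + 1), (M ^ t) a b := by
    intro a b; rw [hP]
    rw [Matrix.sum_apply]
  have hPnn : ∀ a b, 0 ≤ P a b := by
    intro a b; rw [hPapp]
    exact Finset.sum_nonneg fun t _ => pow_entry_nonneg hM t a b
  have hPpos : ∀ a b, 0 < P a b := by
    intro a b
    have hmem : kf b a ∈ Finset.range (K + 1) := by
      rw [Finset.mem_range, Nat.lt_succ_iff, hK]
      exact Finset.le_sup (f := fun p : Fin n × Fin n => kf p.1 p.2)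
        (Finset.mem_univ ((b, a) : Fin n × Fin n))
    have : (M ^ (kf b a)) a b ≤ P a b := by
      rw [hPapp]
      exact Finset.single_le_sum (fun t _ => pow_entry_nonneg hM t a b) hmem
    exact lt_of_lt_of_le (hkfpos b a) this
  have hMP : M * P = P * M := by
    rw [hP, Finset.mul_sum, Finset.sum_mul]
    congr 1; ext t
    rw [← pow_succ, ← pow_succ']
  -- main equality by contradiction
  have heq : M.mulVec y = δ₀ • y := by
    by_contra hne2
    set w : Fin n → ℝ := M.mulVec y - δ₀ • y with hw
    have hw0 : ∀ i, 0 ≤ w i := by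
      intro i; rw [hw]; simp only [Pi.sub_apply, Pi.smul_apply, smul_eq_mul]
      linarith [hsub i]
    have hwne : w ≠ 0 := by
      intro hc; apply hne2; rw [hw] at hc; rwa [sub_eq_zero] at hc
    set z : Fin n → ℝ := P.mulVec y with hz
    have hzpos : ∀ i, 0 < z i := mulVec_pos hPpos hy0 hyne
    set Pw : Fin n → ℝ := P.mulVec w with hPw
    have hPwpos : ∀ i, 0 < Pw i := mulVec_pos hPpos hw0 hwne
    have hMz : M.mulVec z = δ₀ • z + Pw := by
      rw [hz, hPw, Matrix.mulVec_mulVec, hMP, ← Matrix.mulVec_mulVec]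
      have : M.mulVec y = δ₀ • y + w := by rw [hw]; abel
      rw [this, Matrix.mulVec_add, Matrix.mulVec_smul]
    set ε : ℝ := Finset.univ.inf' (Finset.univ_nonempty) (fun i => Pw i / z i) with hε
    have hεpos : 0 < ε := by
      rw [hε, Finset.lt_inf'_iff]
      exact fun i _ => div_pos (hPwpos i) (hzpos i)
    have hεle : ∀ i, ε * z i ≤ Pw i := by
      intro i
      have h1 : ε ≤ Pw i / z i := Finset.inf'_le _ (Finset.mem_univ i)
      rwa [le_div_iff₀ (hzpos i)] at h1
    have hstep : ∀ i, (δ₀ + ε) * z i ≤ M.mulVec z i := by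
      intro i
      rw [hMz]
      simp only [Pi.add_apply, Pi.smul_apply, smul_eq_mul]
      have := hεle i
      linarith
    have hgrow : ∀ m : ℕ, ∀ i, (δ₀ + ε) ^ m * z i ≤ ((M ^ m).mulVec z) i := by
      intro m
      induction m with
      | zero => intro i; simp [Matrix.one_mulVec]
      | succ m ih =>
        intro i
        have h1 : ((M ^ (m + 1)).mulVec z) i = (M.mulVec ((M ^ m).mulVec z)) i := by
          conv_rhs => rw [Matrix.mulVec_mulVec]
          rw [pow_succ']
        rw [h1]
        have h2 : ∀ j, ((δ₀ + ε) ^ m • z) j ≤ ((M ^ m).mulVec z) j := by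
          intro j; simpa using ih j
        have h3 : (M.mulVec ((δ₀ + ε) ^ m • z)) i ≤ (M.mulVec ((M ^ m).mulVec z)) i :=
          mulVec_mono hM h2 i
        have h4 : (M.mulVec ((δ₀ + ε) ^ m • z)) i = (δ₀ + ε) ^ m * (M.mulVec z) i := by
          rw [Matrix.mulVec_smul]; simp
        have h5 : (δ₀ + ε) ^ (m + 1) * z i ≤ (δ₀ + ε) ^ m * (M.mulVec z) i := by
          rw [pow_succ]
          have := hstep i
          have hp : (0:ℝ) ≤ (δ₀ + ε) ^ m := by positivity
          calc (δ₀ + ε) ^ m * (δ₀ + ε) * z i = (δ₀ + ε) ^ m * ((δ₀ + ε) * z i) := by ring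
            _ ≤ (δ₀ + ε) ^ m * (M.mulVec z) i := by
                exact mul_le_mul_of_nonneg_left (hstep i) hp
        linarith
    -- upper bound on entries of M ^ m
    set Bc : ℝ := Finset.univ.sup' (Finset.univ_nonempty)
      (fun ab : Fin n × Fin n => (n * δ₀ ^ (kf ab.1 ab.2)) / ((M ^ (kf ab.1 ab.2)) ab.2 ab.1))
      with hBc
    have hentry : ∀ m : ℕ, m ≠ 0 → ∀ a b, (M ^ m) a b ≤ Bc * δ₀ ^ m := by
      intro m hm a b
      set k := kf a b with hk
      have h1 : (M ^ m) a b * (M ^ k) b a ≤ (M ^ (m + k)) a a := pow_entry_mul_le hM m k a b a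
      have h2 : (M ^ (m + k)) a a ≤ Matrix.trace (M ^ (m + k)) := by
        rw [Matrix.trace]
        exact Finset.single_le_sum (f := fun c => (M ^ (m + k)) c c)
          (fun c _ => pow_entry_nonneg hM _ c c) (Finset.mem_univ a)
      have h3 : Matrix.trace (M ^ (m + k)) ≤ n * δ₀ ^ (m + k) := htr (m + k) (by omega)
      have h4 : (M ^ m) a b ≤ n * δ₀ ^ (m + k) / ((M ^ k) b a) := by
        rw [le_div_iff₀ (hkfpos a b)]
        calc (M ^ m) a b * (M ^ k) b a ≤ (M ^ (m + k)) a a := h1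
          _ ≤ n * δ₀ ^ (m + k) := le_trans h2 h3
      have h5 : (n : ℝ) * δ₀ ^ (m + k) / ((M ^ k) b a)
          = (n * δ₀ ^ k / ((M ^ k) b a)) * δ₀ ^ m := by
        rw [pow_add]; ring
      have h6 : (n : ℝ) * δ₀ ^ k / ((M ^ k) b a) ≤ Bc :=
        Finset.le_sup' (f := fun ab : Fin n × Fin n =>
          (n * δ₀ ^ (kf ab.1 ab.2)) / ((M ^ (kf ab.1 ab.2)) ab.2 ab.1))
          (Finset.mem_univ ((a, b) : Fin n × Fin n))
      calc (M ^ m) a b ≤ n * δ₀ ^ (m + k) / ((M ^ k) b a) := h4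
        _ = (n * δ₀ ^ k / ((M ^ k) b a)) * δ₀ ^ m := h5
        _ ≤ Bc * δ₀ ^ m := by
            apply mul_le_mul_of_nonneg_right h6 (by positivity)
    obtain ⟨i0⟩ := id hne
    set Zs : ℝ := ∑ b, z b with hZs
    have hZpos : 0 < Zs := by
      rw [hZs]
      exact Finset.sum_pos (fun b _ => hzpos b) Finset.univ_nonempty
    have hup : ∀ m : ℕ, m ≠ 0 → (δ₀ + ε) ^ m * z i0 ≤ Bc * δ₀ ^ m * Zs := by
      intro m hm
      have h1 : (δ₀ + ε) ^ m * z i0 ≤ ((M ^ m).mulVec z) i0 := hgrow m i0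
      have h2 : ((M ^ m).mulVec z) i0 ≤ ∑ b, (Bc * δ₀ ^ m) * z b := by
        show ∑ b, (M ^ m) i0 b * z b ≤ ∑ b, (Bc * δ₀ ^ m) * z b
        apply Finset.sum_le_sum
        intro b _
        exact mul_le_mul_of_nonneg_right (hentry m hm i0 b) (hzpos b).le
      have h3 : ∑ b, (Bc * δ₀ ^ m) * z b = Bc * δ₀ ^ m * Zs := by
        rw [hZs, Finset.mul_sum]
      linarith
    set Cst : ℝ := Bc * Zs / z i0 with hCst
    have hratio : ∀ m : ℕ, m ≠ 0 → ((δ₀ + ε) / δ₀) ^ m ≤ Cst := by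
      intro m hm
      have h1 := hup m hm
      rw [div_pow, div_le_iff₀ (by positivity : (0:ℝ) < δ₀ ^ m), hCst]
      rw [div_mul_eq_mul_div, le_div_iff₀ (hzpos i0)]
      calc (δ₀ + ε) ^ m * z i0 ≤ Bc * δ₀ ^ m * Zs := h1
        _ = Bc * Zs * δ₀ ^ m := by ring
    have hr1 : 1 < (δ₀ + ε) / δ₀ := (one_lt_div hδpos).mpr (by linarith)
    obtain ⟨m0, hm0⟩ := pow_unbounded_of_one_lt Cst hr1
    have h1 : ((δ₀ + ε) / δ₀) ^ m0 ≤ ((δ₀ + ε) / δ₀) ^ (m0 + 1) :=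
      pow_le_pow_right₀ hr1.le (Nat.le_succ m0)
    have h2 := hratio (m0 + 1) (Nat.succ_ne_zero m0)
    linarith
  refine ⟨heq, ?_⟩
  -- positivity of y
  have heqk : ∀ m : ℕ, (M ^ m).mulVec y = (δ₀ ^ m) • y := by
    intro m
    induction m with
    | zero => simp [Matrix.one_mulVec]
    | succ m ih =>
      rw [pow_succ, ← Matrix.mulVec_mulVec, heq, Matrix.mulVec_smul, ih]
      rw [smul_smul, pow_succ]
      congr 1
      ring
  intro i
  obtain ⟨j0, hj0⟩ : ∃ j0, y j0 ≠ 0 := by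
    by_contra hc; push_neg at hc; exact hyne (funext hc)
  have hyj0 : 0 < y j0 := lt_of_le_of_ne (hy0 j0) (Ne.symm hj0)
  set k := kf j0 i with hk
  have h1 : (M ^ k) i j0 * y j0 ≤ ((M ^ k).mulVec y) i := by
    apply Finset.single_le_sum (f := fun j => (M ^ k) i j * y j) ?_ (Finset.mem_univ j0)
    exact fun j _ => mul_nonneg (pow_entry_nonneg hM k i j) (hy0 j)
  have h2 : ((M ^ k).mulVec y) i = δ₀ ^ k * y i := by rw [heqk]; simp
  have h3 : 0 < (M ^ k) i j0 * y j0 := mul_pos (hkfpos j0 i) hyj0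
  have h4 : 0 < δ₀ ^ k * y i := by rw [← h2]; exact lt_of_lt_of_le h3 h1
  have h5 : (0:ℝ) < δ₀ ^ k := by positivity
  by_contra hyi
  push_neg at hyi
  nlinarith

end Sub


lemma perron_vector {M : Matrix (Fin n) (Fin n) ℝ} (hM : ∀ i j, 0 ≤ M i j)
    (hreach : ∀ i j : Fin n, ∃ k : ℕ, (M ^ k) j i ≠ 0)
    {δ₀ : ℝ} (hδpos : 0 < δ₀)
    (htr : ∀ m : ℕ, m ≠ 0 → Matrix.trace (M ^ m) ≤ n * δ₀ ^ m)
    (hδeig : (δ₀ : ℂ) ∈ M.eigs) :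
    ∃ u : Fin n → ℝ, (∀ i, 0 < u i) ∧ M.mulVec u = δ₀ • u := by
  have hroot : M.charpoly.eval δ₀ = 0 := by
    have h1 : ((δ₀ : ℂ)) ∈ ((M.map (Complex.ofReal)).charpoly).roots := hδeig
    have h2 : (M.map (Complex.ofReal)).charpoly = (M.charpoly).map Complex.ofRealHom := by
      exact Matrix.charpoly_map M Complex.ofRealHom
    rw [h2, Polynomial.mem_roots] at h1
    · have h3 := h1
      rw [IsRoot.def] at h3
      have h4 : Polynomial.eval ((Complex.ofRealHom : ℝ →+* ℂ) δ₀)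
          (M.charpoly.map Complex.ofRealHom) = Complex.ofRealHom (M.charpoly.eval δ₀) := by
        rw [Polynomial.eval_map, Polynomial.eval₂_at_apply]
      have h5 : (Complex.ofRealHom δ₀) = ((δ₀ : ℝ) : ℂ) := rfl
      rw [h5] at h4
      rw [h4] at h3
      have h6 : Complex.ofRealHom (eval δ₀ M.charpoly) = 0 := h3
      rw [show (0:ℂ) = Complex.ofRealHom (0:ℝ) from rfl] at h6
      exact Complex.ofReal_injective h6
    · intro hc
      have := Polynomial.map_monic_ne_zero (M.charpoly_monic) (f := Complex.ofRealHom)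
      exact this hc
  obtain ⟨x, hxne, hx⟩ := (isRoot_charpoly_iff_exists M δ₀).mp hroot
  set y : Fin n → ℝ := fun i => |x i| with hy
  have hy0 : ∀ i, 0 ≤ y i := fun i => abs_nonneg _
  have hyne : y ≠ 0 := by
    intro hc
    apply hxne
    ext i
    have : y i = 0 := by rw [hc]; rfl
    rw [hy] at this
    simpa using this
  have hsub : ∀ i, δ₀ * y i ≤ M.mulVec y i := by
    intro i
    have h1 : |(M.mulVec x) i| = δ₀ * y i := by
      rw [hx]
      simp only [Pi.smul_apply, smul_eq_mul, abs_mul, abs_of_pos hδpos, hy]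
    have h2 : |(M.mulVec x) i| ≤ (M.mulVec y) i := by
      show |∑ j, M i j * x j| ≤ ∑ j, M i j * y j
      calc |∑ j, M i j * x j| ≤ ∑ j, |M i j * x j| := Finset.abs_sum_le_sum_abs _ _
        _ = ∑ j, M i j * y j := by
            apply Finset.sum_congr rfl
            intro j _
            rw [abs_mul, abs_of_nonneg (hM i j), hy]
    linarith
  obtain ⟨heq, hpos⟩ := subinvariant_eq hM hreach hδpos htr hy0 hyne hsub
  exact ⟨y, hpos, heq⟩


/-- A unit-modulus potential realizing the rotation `ζ`. -/
def UnitPot (M : Matrix (Fin n) (Fin n) ℝ) (ζ : ℂ) : Prop :=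
  ∃ φ : Fin n → ℂ, (∀ i, ‖φ i‖ = 1) ∧ ∀ i j, M i j ≠ 0 → φ j = ζ * φ i

lemma re_eq_abs_imp {w : ℂ} (h : w.re = ‖w‖) : w = ((‖w‖ : ℝ) : ℂ) := by
  have h1 : (‖w‖) ^ 2 = w.re ^ 2 + w.im ^ 2 := by
    rw [Complex.sq_norm, Complex.normSq_apply]; ring
  have h1' : w.im ^ 2 = 0 := by rw [h] at h1; linarith
  have h2 : w.im = 0 := by nlinarith [h1', sq_nonneg w.im]

  apply Complex.ext
  · simp [h]
  · simp [h2]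

lemma col_ne {M : Matrix (Fin n) (Fin n) ℝ}
    (hreach : ∀ i j : Fin n, ∃ k : ℕ, (M ^ k) j i ≠ 0)
    {δ₀ : ℝ} (hδpos : 0 < δ₀) {u : Fin n → ℝ} (hupos : ∀ i, 0 < u i)
    (hu : M.mulVec u = δ₀ • u) : ∀ i : Fin n, ∃ b, M b i ≠ 0 := by
  intro i
  have hrow : ∀ a : Fin n, ∃ j, M a j ≠ 0 := by
    intro a
    by_contra hc
    push_neg at hc
    have h1 : (M.mulVec u) a = 0 := by
      show ∑ j, M a j * u j = 0
      exact Finset.sum_eq_zero fun j _ => by rw [hc j, zero_mul]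
    rw [hu] at h1
    simp only [Pi.smul_apply, smul_eq_mul] at h1
    nlinarith [hupos a, hδpos]
  by_cases hall : ∀ j : Fin n, j = i
  · obtain ⟨j, hj⟩ := hrow i
    exact ⟨i, by rwa [hall j] at hj⟩
  · push_neg at hall
    obtain ⟨j, hj⟩ := hall
    by_contra hc
    push_neg at hc
    obtain ⟨k, hk⟩ := hreach i j
    rcases k with _ | m
    · exact hk (Matrix.one_apply_ne hj)
    · apply hk
      rw [pow_succ, Matrix.mul_apply]
      exact Finset.sum_eq_zero fun c _ => by rw [hc c, mul_zero]

lemma align {M : Matrix (Fin n) (Fin n) ℝ} (hM : ∀ i j, 0 ≤ M i j)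
    (hreach : ∀ i j : Fin n, ∃ k : ℕ, (M ^ k) j i ≠ 0)
    {δ₀ : ℝ} (hδpos : 0 < δ₀)
    (htr : ∀ m : ℕ, m ≠ 0 → Matrix.trace (M ^ m) ≤ n * δ₀ ^ m)
    {lam : ℂ} (hlam : lam ∈ M.eigs) (hlabs : ‖lam‖ = δ₀) :
    UnitPot M (lam / (δ₀ : ℂ)) := by
  obtain ⟨y, hyne, hy⟩ := (mem_roots_charpoly_iff_exists (M.map Complex.ofReal) lam).mp hlam
  set a : Fin n → ℝ := fun i => ‖y i‖ with ha
  have ha0 : ∀ i, 0 ≤ a i := fun i => norm_nonneg _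
  have hane : a ≠ 0 := by
    intro hc
    apply hyne
    ext i
    have : a i = 0 := by rw [hc]; rfl
    rw [ha] at this
    simpa using this
  have hAy : ∀ i, (∑ j, (M.map Complex.ofReal) i j * y j) = lam * y i := by
    intro i
    have := congrFun hy i
    simpa [Matrix.mulVec, dotProduct] using this
  have hMa : ∀ i, (M.mulVec a) i = ∑ j, ‖(M.map Complex.ofReal) i j * y j‖ := by
    intro i
    show ∑ j, M i j * a j = _
    apply Finset.sum_congr rfl
    intro j _
    rw [norm_mul, ha]
    simp [Matrix.map_apply, Complex.norm_real, abs_of_nonneg (hM i j)]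
  have hsub : ∀ i, δ₀ * a i ≤ (M.mulVec a) i := by
    intro i
    rw [hMa i]
    calc δ₀ * a i = ‖lam * y i‖ := by
          rw [norm_mul, hlabs, ha]
      _ = ‖∑ j, (M.map Complex.ofReal) i j * y j‖ := by rw [hAy i]
      _ ≤ ∑ j, ‖(M.map Complex.ofReal) i j * y j‖ :=
          norm_sum_le _ _
  obtain ⟨heq, hapos⟩ := subinvariant_eq hM hreach hδpos htr ha0 hane hsub
  have hynz : ∀ i, y i ≠ 0 := by
    intro i hc
    have : a i = 0 := by rw [ha]; simp [hc]
    exact absurd this (ne_of_gt (hapos i))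
  set φ : Fin n → ℂ := fun i => y i / ((a i : ℝ) : ℂ) with hφ
  have hφabs : ∀ i, ‖φ i‖ = 1 := by
    intro i
    rw [hφ]
    rw [norm_div, Complex.norm_real, Real.norm_eq_abs, abs_of_pos (hapos i)]
    exact div_self (ne_of_gt (hapos i))
  refine ⟨φ, hφabs, ?_⟩
  intro i j hij
  -- equality in the triangle inequality at row i
  have hci : (0:ℝ) < δ₀ * a i := mul_pos hδpos (hapos i)
  set s : ℂ := lam * y i / ((δ₀ * a i : ℝ) : ℂ) with hs
  have hc0 : ((δ₀ * a i : ℝ) : ℂ) ≠ 0 := Complex.ofReal_ne_zero.mpr (ne_of_gt hci)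
  have hsabs : ‖s‖ = 1 := by
    rw [hs, norm_div, norm_mul, hlabs, Complex.norm_real, Real.norm_eq_abs, abs_of_pos hci]
    exact div_self (ne_of_gt hci)
  have hlamyi : lam * y i = s * ((δ₀ * a i : ℝ) : ℂ) := by
    rw [hs, div_mul_cancel₀ _ hc0]
  -- sum of the gaps is zero
  have hgap : ∑ t, (M i t * a t - ((starRingEnd ℂ) s * ((M.map Complex.ofReal) i t * y t)).re)
      = 0 := by
    rw [Finset.sum_sub_distrib]
    have h1 : ∑ t, M i t * a t = δ₀ * a i := by
      have := congrFun heq i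
      simpa [Matrix.mulVec, dotProduct] using this
    have h2 : ∑ t, ((starRingEnd ℂ) s * ((M.map Complex.ofReal) i t * y t)).re
        = (((starRingEnd ℂ) s) * (lam * y i)).re := by
      rw [← Complex.re_sum]
      congr 1
      rw [← Finset.mul_sum, hAy i]
    have h3 : (starRingEnd ℂ) s * s = 1 := by
      rw [mul_comm, Complex.mul_conj, Complex.normSq_eq_norm_sq, hsabs]
      norm_num
    rw [h1, h2, hlamyi, ← mul_assoc, h3, one_mul, Complex.ofReal_re, sub_self]
  have hterm : ∀ t ∈ Finset.univ, (0:ℝ) ≤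
      M i t * a t - ((starRingEnd ℂ) s * ((M.map Complex.ofReal) i t * y t)).re := by
    intro t _
    have h1 : ((starRingEnd ℂ) s * ((M.map Complex.ofReal) i t * y t)).re
        ≤ ‖(starRingEnd ℂ) s * ((M.map Complex.ofReal) i t * y t)‖ :=
      Complex.re_le_norm _
    have h2 : ‖(starRingEnd ℂ) s * ((M.map Complex.ofReal) i t * y t)‖
        = M i t * a t := by
      rw [norm_mul, norm_mul, Complex.norm_conj, hsabs, one_mul]
      simp [Matrix.map_apply, Complex.norm_real, abs_of_nonneg (hM i t), ha]
    linarith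
  have hzero := (Finset.sum_eq_zero_iff_of_nonneg hterm).mp hgap j (Finset.mem_univ j)
  have hre : (((starRingEnd ℂ) s) * y j).re = a j := by
    have h1 : ((starRingEnd ℂ) s * ((M.map Complex.ofReal) i j * y j)).re
        = M i j * (((starRingEnd ℂ) s) * y j).re := by
      have : (starRingEnd ℂ) s * ((M.map Complex.ofReal) i j * y j)
          = ((M i j : ℝ) : ℂ) * ((starRingEnd ℂ) s * y j) := by
        simp only [Matrix.map_apply]
        ring
      rw [this, Complex.re_ofReal_mul]
    rw [h1] at hzero
    have h7 : M i j * a j = M i j * (((starRingEnd ℂ) s) * y j).re := by linarith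
    exact (mul_left_cancel₀ hij h7).symm
  have habsj : ‖((starRingEnd ℂ) s) * y j‖ = a j := by
    rw [norm_mul, Complex.norm_conj, hsabs, one_mul, ha]
  have hwj : ((starRingEnd ℂ) s) * y j = ((a j : ℝ) : ℂ) := by
    have := re_eq_abs_imp (w := ((starRingEnd ℂ) s) * y j) (by rw [habsj, hre])
    rwa [habsj] at this
  have hyj : y j = s * ((a j : ℝ) : ℂ) := by
    have h1 : s * (((starRingEnd ℂ) s) * y j) = s * ((a j : ℝ) : ℂ) := by rw [hwj]
    rw [← mul_assoc, Complex.mul_conj, Complex.normSq_eq_norm_sq, hsabs] at h1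
    norm_num at h1
    exact h1
  -- conclude
  have haj : ((a j : ℝ) : ℂ) ≠ 0 := by
    simp only [ne_eq, Complex.ofReal_eq_zero]
    exact ne_of_gt (hapos j)
  have hai : ((a i : ℝ) : ℂ) ≠ 0 := by
    simp only [ne_eq, Complex.ofReal_eq_zero]
    exact ne_of_gt (hapos i)
  have hδ0 : ((δ₀ : ℝ) : ℂ) ≠ 0 := by
    simp only [ne_eq, Complex.ofReal_eq_zero]
    exact ne_of_gt hδpos
  rw [hφ]
  show y j / ((a j : ℝ) : ℂ) = lam / (δ₀:ℂ) * (y i / ((a i : ℝ) : ℂ))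
  rw [hyj, mul_div_assoc, div_self haj, mul_one, hs, Complex.ofReal_mul]
  field_simp


lemma unitPot_abs_one {M : Matrix (Fin n) (Fin n) ℝ}
    (hcol : ∀ i : Fin n, ∃ b, M b i ≠ 0) (hne : Nonempty (Fin n))
    {ζ : ℂ} (hζ : UnitPot M ζ) : ‖ζ‖ = 1 := by
  obtain ⟨φ, hφ1, hφ2⟩ := hζ
  obtain ⟨i⟩ := hne
  obtain ⟨b, hb⟩ := hcol i
  have := hφ2 b i hb
  have h1 : ‖φ i‖ = ‖ζ‖ * ‖φ b‖ := by
    rw [this, norm_mul]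
  rw [hφ1 i, hφ1 b, mul_one] at h1
  exact h1.symm

lemma unitPot_eig {M : Matrix (Fin n) (Fin n) ℝ} (hne : Nonempty (Fin n))
    {δ₀ : ℝ} {u : Fin n → ℝ} (hupos : ∀ i, 0 < u i) (hu : M.mulVec u = δ₀ • u)
    {ζ : ℂ} (hζ : UnitPot M ζ) : ((δ₀ : ℂ) * ζ) ∈ M.eigs := by
  obtain ⟨φ, hφ1, hφ2⟩ := hζ
  have hφnz : ∀ i, φ i ≠ 0 := by
    intro i hc
    have := hφ1 i
    rw [hc] at this
    simp at this
  set w : Fin n → ℂ := fun i => φ i * ((u i : ℝ) : ℂ) with hw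
  have hwne : w ≠ 0 := by
    intro hc
    obtain ⟨i⟩ := hne
    have h1 : w i = 0 := by rw [hc]; rfl
    rw [hw] at h1
    exact (mul_ne_zero (hφnz i)
      (Complex.ofReal_ne_zero.mpr (ne_of_gt (hupos i)))) h1
  have key : ∀ i, (∑ j, ((M i j : ℝ):ℂ) * (φ j * ((u j : ℝ):ℂ))) = ((δ₀:ℂ) * ζ) * w i := by
    intro i
    have h1 : ∀ j, ((M i j:ℝ):ℂ) * (φ j * ((u j : ℝ):ℂ))
        = ζ * φ i * (((M i j * u j : ℝ)):ℂ) := by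
      intro j
      by_cases h : M i j = 0
      · simp [h]
      · rw [hφ2 i j h]; push_cast; ring
    rw [Finset.sum_congr rfl (fun j _ => h1 j), ← Finset.mul_sum]
    have h2 : ∑ j, (((M i j * u j : ℝ)):ℂ) = ((δ₀ * u i : ℝ) : ℂ) := by
      rw [← Complex.ofReal_sum]
      congr 1
      have := congrFun hu i
      simpa [Matrix.mulVec, dotProduct] using this
    rw [h2, hw]; push_cast; ring
  apply (mem_roots_charpoly_iff_exists (M.map Complex.ofReal) ((δ₀:ℂ) * ζ)).mpr
  refine ⟨w, hwne, ?_⟩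
  funext i
  show ∑ j, (M.map Complex.ofReal) i j * w j = ((δ₀:ℂ) * ζ) * w i
  exact key i

lemma unitPot_cycle_pow_eq_one {M : Matrix (Fin n) (Fin n) ℝ} {ζ : ℂ}
    (hζ : UnitPot M ζ) {v : Fin n} {k : ℕ} (hcyc : M.HasCycle v k) : ζ ^ k = 1 := by
  obtain ⟨φ, hφ1, hφ2⟩ := hζ
  obtain ⟨f, h0, hk, harcs⟩ := hcyc
  have hchain : ∀ t, t ≤ k → φ (f 0) = ζ ^ t * φ (f t) := by
    intro t
    induction t with
    | zero => intro _; simp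
    | succ t ih =>
      intro ht
      have h1 := ih (Nat.le_of_succ_le ht)
      have h2 : φ (f t) = ζ * φ (f (t + 1)) := hφ2 (f (t + 1)) (f t) (harcs t ht)
      rw [h1, h2, ← mul_assoc, ← pow_succ]
  have := hchain k le_rfl
  rw [hk, h0] at this
  have hφv : φ v ≠ 0 := by
    intro hc
    have := hφ1 v
    rw [hc] at this
    simp at this
  have h3 : (ζ ^ k - 1) * φ v = 0 := by rw [sub_mul, ← this, one_mul, sub_self]
  rcases mul_eq_zero.mp h3 with h | h
  · exact sub_eq_zero.mp h
  · exact absurd h hφv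


lemma unitPot_of_dvd_cycles {M : Matrix (Fin n) (Fin n) ℝ} (hM : ∀ i j, 0 ≤ M i j)
    (hne : Nonempty (Fin n))
    (hreach1 : ∀ i j : Fin n, ∃ k : ℕ, k ≠ 0 ∧ (M ^ k) j i ≠ 0)
    {e : ℕ} (he : e ≠ 0)
    (hdvd : ∀ (v : Fin n) (k : ℕ), k ≠ 0 → M.HasCycle v k → e ∣ k) :
    UnitPot M (Complex.exp (2 * Real.pi * Complex.I / e)) := by
  classical
  have hcycdvd : ∀ (v : Fin n) (k : ℕ), k ≠ 0 → (M ^ k) v v ≠ 0 → e ∣ k := by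
    intro v k hk h
    exact hdvd v k hk ((pow_entry_ne_iff_path hM k v v).mp h)
  obtain ⟨v₀⟩ := hne
  set L : Fin n → ℕ := fun i => (hreach1 v₀ i).choose with hLdef
  have hLs : ∀ i, L i ≠ 0 ∧ (M ^ (L i)) i v₀ ≠ 0 := fun i => (hreach1 v₀ i).choose_spec
  set R : Fin n → ℕ := fun i => (hreach1 i v₀).choose with hRdef
  have hRs : ∀ i, R i ≠ 0 ∧ (M ^ (R i)) v₀ i ≠ 0 := fun i => (hreach1 i v₀).choose_spec
  have hposL : ∀ i, 0 < (M ^ (L i)) i v₀ :=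
    fun i => lt_of_le_of_ne (pow_entry_nonneg hM _ i v₀) (Ne.symm (hLs i).2)
  have hposR : ∀ i, 0 < (M ^ (R i)) v₀ i :=
    fun i => lt_of_le_of_ne (pow_entry_nonneg hM _ v₀ i) (Ne.symm (hRs i).2)
  have hLR : ∀ i, e ∣ (L i + R i) := by
    intro i
    have h1 : (M ^ (R i)) v₀ i * (M ^ (L i)) i v₀ ≤ (M ^ (R i + L i)) v₀ v₀ :=
      pow_entry_mul_le hM (R i) (L i) v₀ i v₀
    have h2 : 0 < (M ^ (R i + L i)) v₀ v₀ :=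
      lt_of_lt_of_le (mul_pos (hposR i) (hposL i)) h1
    have h3 := hcycdvd v₀ (R i + L i) (by have := (hLs i).1; omega) (ne_of_gt h2)
    rwa [Nat.add_comm] at h3
  have harc : ∀ i j, M i j ≠ 0 → e ∣ (L j + 1 + R i) := by
    intro i j hij
    have hij' : 0 < M i j := lt_of_le_of_ne (hM i j) (Ne.symm hij)
    have h0 : (M ^ 1) i j * (M ^ (L j)) j v₀ ≤ (M ^ (1 + L j)) i v₀ :=
      pow_entry_mul_le hM 1 (L j) i j v₀
    have h0' : 0 < (M ^ (1 + L j)) i v₀ := by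
      refine lt_of_lt_of_le (mul_pos ?_ (hposL j)) h0
      rw [pow_one]; exact hij'
    have h1 : (M ^ (R i)) v₀ i * (M ^ (1 + L j)) i v₀ ≤ (M ^ (R i + (1 + L j))) v₀ v₀ :=
      pow_entry_mul_le hM (R i) (1 + L j) v₀ i v₀
    have h2 : 0 < (M ^ (R i + (1 + L j))) v₀ v₀ :=
      lt_of_lt_of_le (mul_pos (hposR i) h0') h1
    have h3 := hcycdvd v₀ (R i + (1 + L j)) (by omega) (ne_of_gt h2)
    have h4 : R i + (1 + L j) = L j + 1 + R i := by omega
    rwa [h4] at h3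
  have hmod : ∀ i j, M i j ≠ 0 → (L i) % e = (L j + 1) % e := by
    intro i j hij
    have h1 : (L i + R i) % e = 0 % e := (Nat.modEq_zero_iff_dvd).mpr (hLR i)
    have h2 : (L j + 1 + R i) % e = 0 % e := (Nat.modEq_zero_iff_dvd).mpr (harc i j hij)
    have h3 : (L i + R i) % e = (L j + 1 + R i) % e := by omega
    have h4 : Nat.ModEq e (L i + R i) (L j + 1 + R i) := h3
    exact Nat.ModEq.add_right_cancel' (R i) h4
  set ζ : ℂ := Complex.exp (2 * Real.pi * Complex.I / e) with hζdef
  have hprim : IsPrimitiveRoot ζ e := Complex.isPrimitiveRoot_exp e he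
  have hζ1 : ζ ^ e = 1 := hprim.pow_eq_one
  have habs : ‖ζ‖ = 1 := by
    have h1 : (‖ζ‖) ^ e = 1 := by
      rw [← norm_pow, hζ1]
      exact norm_one
    rcases lt_trichotomy (‖ζ‖) 1 with h | h | h
    · exfalso
      have := pow_lt_one₀ (norm_nonneg ζ) h he
      rw [h1] at this
      exact lt_irrefl 1 this
    · exact h
    · exfalso
      have := one_lt_pow₀ h he
      rw [h1] at this
      exact lt_irrefl 1 this
  have hζ0 : ζ ≠ 0 := by
    intro hc
    rw [hc] at habs
    simp at habs
  have hpowmod : ∀ a : ℕ, ζ ^ a = ζ ^ (a % e) := by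
    intro a
    conv_lhs => rw [← Nat.div_add_mod a e]
    rw [pow_add, pow_mul, hζ1, one_pow, one_mul]
  refine ⟨fun i => (ζ ^ (L i))⁻¹, ?_, ?_⟩
  · intro i
    rw [norm_inv, norm_pow, habs, one_pow, inv_one]
  · intro i j hij
    have hLij : ζ ^ (L i) = ζ ^ (L j + 1) := by
      rw [hpowmod (L i), hpowmod (L j + 1), hmod i j hij]
    show (ζ ^ L j)⁻¹ = ζ * (ζ ^ L i)⁻¹
    rw [hLij, pow_succ, mul_inv]
    have hzL : ζ ^ (L j) ≠ 0 := pow_ne_zero _ hζ0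
    field_simp


end PFAux

open Matrix PFAux

/-- For an irreducible nonnegative matrix `M`, the index of imprimitivity `h(M)`
(the number of eigenvalues of modulus equal to the Perron–Frobenius eigenvalue `δ₀`)
equals the gcd of the lengths of all directed cycles in the associated graph `D(M)`. -/
theorem imprimitivity_eq_gcd_cycle_lengths {n : ℕ} (M : Matrix (Fin n) (Fin n) ℝ)
    (hM : ∀ i j, 0 ≤ M i j) (hirr : M.IsIrreducible')
    (δ₀ : ℝ) (hδpos : 0 < δ₀) (hδeig : (δ₀ : ℂ) ∈ M.eigs)
    (hδmax : ∀ δ ∈ M.eigs, ‖δ‖ ≤ δ₀)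
    (h : ℕ) (hh : h = (M.eigs.toFinset.filter (fun δ => ‖δ‖ = δ₀)).card) :
    IsGCDOf {k | 1 ≤ k ∧ ∃ v : Fin n, M.HasCycle v k} h := by
  classical
  -- n is positive
  have hn0 : n ≠ 0 := by
    intro hc
    subst hc
    have h1 : (M.map Complex.ofReal).charpoly = 1 := by
      have := (M.map Complex.ofReal).charpoly_monic
      exact this.natDegree_eq_zero.mp
        (by rw [Matrix.charpoly_natDegree_eq_dim, Fintype.card_fin])
    have h2 : M.eigs = 0 := by
      show (M.map Complex.ofReal).charpoly.roots = 0
      rw [h1, Polynomial.roots_one]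
      rfl
    rw [h2] at hδeig
    simp at hδeig
  have hne : Nonempty (Fin n) := ⟨⟨0, Nat.pos_of_ne_zero hn0⟩⟩
  have hreach := reach_of_irreducible M hM hirr
  have htr : ∀ m : ℕ, m ≠ 0 → Matrix.trace (M ^ m) ≤ n * δ₀ ^ m :=
    fun m hm => trace_pow_le M δ₀ hδpos.le hδmax hm
  obtain ⟨u, hupos, hu⟩ := perron_vector hM hreach hδpos htr hδeig
  have hcol := col_ne hreach hδpos hupos hu
  have hreach1 : ∀ i j : Fin n, ∃ k : ℕ, k ≠ 0 ∧ (M ^ k) j i ≠ 0 := by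
    intro i j
    obtain ⟨b, hb⟩ := hcol i
    obtain ⟨k, hk⟩ := hreach b j
    refine ⟨k + 1, Nat.succ_ne_zero k, ?_⟩
    have h1 : (M ^ k) j b * (M ^ 1) b i ≤ (M ^ (k + 1)) j i := pow_entry_mul_le hM k 1 j b i
    have h2 : 0 < (M ^ k) j b * (M ^ 1) b i := by
      apply mul_pos
      · exact lt_of_le_of_ne (pow_entry_nonneg hM k j b) (Ne.symm hk)
      · rw [pow_one]
        exact lt_of_le_of_ne (hM b i) (Ne.symm hb)
    exact ne_of_gt (lt_of_lt_of_le h2 h1)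
  have hδC : ((δ₀ : ℝ) : ℂ) ≠ 0 := Complex.ofReal_ne_zero.mpr (ne_of_gt hδpos)
  -- the group of rotations
  set F : Finset ℂ := M.eigs.toFinset.filter (fun δ => ‖δ‖ = δ₀) with hF
  set Gfin : Finset ℂ := F.image (fun lam => lam / (δ₀ : ℂ)) with hGfin
  have hGcard : Gfin.card = h := by
    rw [hGfin, hh]
    apply Finset.card_image_of_injective
    intro a b hab
    have := congrArg (fun z => z * (δ₀ : ℂ)) hab
    simpa [div_mul_cancel₀ _ hδC] using this
  have hGmem : ∀ ζ : ℂ, ζ ∈ Gfin ↔ UnitPot M ζ := by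
    intro ζ
    constructor
    · intro hζ
      rw [hGfin, Finset.mem_image] at hζ
      obtain ⟨lam, hlam, hlamζ⟩ := hζ
      rw [hF, Finset.mem_filter, Multiset.mem_toFinset] at hlam
      have := align hM hreach hδpos htr hlam.1 hlam.2
      rwa [hlamζ] at this
    · intro hζ
      rw [hGfin, Finset.mem_image]
      refine ⟨(δ₀ : ℂ) * ζ, ?_, by field_simp⟩
      rw [hF, Finset.mem_filter, Multiset.mem_toFinset]
      refine ⟨unitPot_eig hne hupos hu hζ, ?_⟩
      rw [norm_mul, unitPot_abs_one hcol hne hζ, mul_one, Complex.norm_real, Real.norm_eq_abs,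
        abs_of_pos hδpos]
  have hζnz : ∀ ζ : ℂ, UnitPot M ζ → ζ ≠ 0 := by
    intro ζ hζ hc
    have := unitPot_abs_one hcol hne hζ
    rw [hc] at this
    simp at this
  -- the subgroup of ℂˣ
  set H : Subgroup ℂˣ :=
    { carrier := {ζ : ℂˣ | UnitPot M (ζ : ℂ)}
      one_mem' := ⟨fun _ => 1, fun i => by simp, fun i j _ => by simp⟩
      mul_mem' := by
        rintro ζ₁ ζ₂ ⟨φ₁, hφ₁1, hφ₁2⟩ ⟨φ₂, hφ₂1, hφ₂2⟩
        refine ⟨fun i => φ₁ i * φ₂ i, ?_, ?_⟩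
        · intro i
          rw [norm_mul, hφ₁1, hφ₂1, mul_one]
        · intro i j hij
          show φ₁ j * φ₂ j = ((ζ₁ * ζ₂ : ℂˣ) : ℂ) * (φ₁ i * φ₂ i)
          rw [hφ₁2 i j hij, hφ₂2 i j hij, Units.val_mul]
          ring
      inv_mem' := by
        rintro ζ ⟨φ, hφ1, hφ2⟩
        refine ⟨fun i => (φ i)⁻¹, ?_, ?_⟩
        · intro i
          rw [norm_inv, hφ1, inv_one]
        · intro i j hij
          show (φ j)⁻¹ = ((ζ⁻¹ : ℂˣ) : ℂ) * (φ i)⁻¹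
          rw [hφ2 i j hij, mul_inv, Units.val_inv_eq_inv_val] } with hH
  have hHmem : ∀ ζ : ℂˣ, ζ ∈ H ↔ UnitPot M (ζ : ℂ) := fun ζ => Iff.rfl
  -- H is finite of cardinality h
  let eH : ↥H ≃ {z : ℂ // z ∈ Gfin} :=
    { toFun := fun ζ => ⟨((ζ : ℂˣ) : ℂ), (hGmem _).mpr ζ.2⟩
      invFun := fun z => ⟨Units.mk0 z.1 (hζnz z.1 ((hGmem _).mp z.2)),
        by rw [hHmem]; exact (hGmem _).mp z.2⟩
      left_inv := fun ζ => by
        apply Subtype.ext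
        apply Units.ext
        rfl
      right_inv := fun z => by apply Subtype.ext; rfl }
  haveI : Fintype ↥H := Fintype.ofEquiv _ eH.symm
  have hHcard : Fintype.card ↥H = h := by
    rw [Fintype.card_congr eH, Fintype.card_coe, hGcard]
  constructor
  · -- h divides every cycle length
    rintro k ⟨hk1, v, hcyc⟩
    haveI : IsCyclic ↥H := subgroup_units_cyclic H
    obtain ⟨g, hg⟩ := IsCyclic.exists_generator (α := ↥H)
    have horder : orderOf g = h := by
      rw [orderOf_eq_card_of_forall_mem_zpowers hg, Nat.card_eq_fintype_card, hHcard]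
    have hgk : g ^ k = 1 := by
      have h1 : (((g : ℂˣ) : ℂ)) ^ k = 1 := unitPot_cycle_pow_eq_one g.2 hcyc
      apply Subtype.ext
      apply Units.ext
      push_cast
      simpa using h1
    rw [← horder]
    exact orderOf_dvd_of_pow_eq_one hgk
  · -- any common divisor of the cycle lengths divides h
    intro e hdiv
    obtain ⟨v₀⟩ := id hne
    obtain ⟨k₀, hk₀ne, hk₀⟩ := hreach1 v₀ v₀
    have hS₀ : k₀ ∈ {k | 1 ≤ k ∧ ∃ v : Fin n, M.HasCycle v k} :=
      ⟨Nat.one_le_iff_ne_zero.mpr hk₀ne, v₀, (pow_entry_ne_iff_path hM k₀ v₀ v₀).mp hk₀⟩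
    have he0 : e ≠ 0 := by
      intro hc
      subst hc
      have := hdiv k₀ hS₀
      exact hk₀ne (Nat.eq_zero_of_zero_dvd this)
    have hdvd : ∀ (v : Fin n) (k : ℕ), k ≠ 0 → M.HasCycle v k → e ∣ k := by
      intro v k hk hcyc
      exact hdiv k ⟨Nat.one_le_iff_ne_zero.mpr hk, v, hcyc⟩
    have hPot := unitPot_of_dvd_cycles hM hne hreach1 he0 hdvd
    set ζe : ℂ := Complex.exp (2 * Real.pi * Complex.I / e) with hζe
    have hζene : ζe ≠ 0 := hζnz ζe hPot
    set ζu : ℂˣ := Units.mk0 ζe hζene with hζu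
    have hζuH : ζu ∈ H := by rw [hHmem]; exact hPot
    set gH : ↥H := ⟨ζu, hζuH⟩ with hgH
    have ho1 : orderOf gH = orderOf ζu :=
      (orderOf_injective H.subtype Subtype.coe_injective gH).symm
    have ho2 : orderOf (ζe : ℂ) = orderOf ζu := by
      have : ((ζu : ℂˣ) : ℂ) = ζe := rfl
      rw [← this]
      exact orderOf_units
    have ho3 : orderOf (ζe : ℂ) = e :=
      ((Complex.isPrimitiveRoot_exp e he0).eq_orderOf).symm
    have := orderOf_dvd_card (G := ↥H) (x := gH)
    rw [ho1, ← ho2, ho3, hHcard] at this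
    exact this
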